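/- Fix ν > 0. Let P = [[1,p₁₂],[p₁₂,p₂₂]] with p₂₂ > p₁₂² and let κ ≥ 0 with p₁₂ ≥ κ. Suppose for some γ the determinant condition δ(κ,γ) = 4(p₁₂−κ)(−γ p₁₂ + (ν−κ)p₂₂) − (−γ + (ν−2κ)p₁₂ + p₂₂)² ≥ 0 holds together with −γ p₁₂ + (ν−κ)p₂₂ ≥ 0 and the corresponding eigenvalue-style conditions (so that (p₁₂,p₂₂) is admissible for κ and γ). Then p₁₂ ≤ ν − κ. -/
import Mathlib


/-- admissibility conditions (C1)–(C5) for some `γ > 0` force `p₁₂ ≤ ν - κ`. -/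
theorem stmt8 (ν κ p12 p22 γ : ℝ) (hν : 0 < ν)
    (hp12 : 0 ≤ p12) (hP : p12 ^ 2 < p22) (hκ : 0 ≤ κ) (hκp : κ ≤ p12)
    (hγ : 0 < γ)
    (hdelta : 0 ≤ 4 * (p12 - κ) * (-γ * p12 + (ν - κ) * p22)
        - (-γ + (ν - 2 * κ) * p12 + p22) ^ 2)
    (hC5 : 0 ≤ -γ * p12 + (ν - κ) * p22) :
    p12 ≤ ν - κ := by
  rcases eq_or_lt_of_le hκp with heq | hlt
  · subst heq
    have hB2 : (-γ + (ν - 2 * κ) * κ + p22) ^ 2 ≤ 0 := by nlinarith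
    have hB : -γ + (ν - 2 * κ) * κ + p22 = 0 := by
      nlinarith [sq_nonneg (-γ + (ν - 2 * κ) * κ + p22)]
    nlinarith [hC5, hB, hP]
  · nlinarith [hdelta, sq_nonneg (γ - ((ν - 2 * κ) * p12 + p22) + 2 * p12 * (p12 - κ)),
      mul_pos (sub_pos.2 hlt) (show 0 < p22 - p12 ^ 2 by linarith)]
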